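/- Let (E, λ) be a limit-closed connectivity system, k ∈ ℕ, and let 𝒜 ⊆ 2^E contain ∅, be closed under complements and binary intersections, and satisfy λ(A) ≤ k−1 for all A ∈ 𝒜. Then there is a partition of E such that every union of partition classes has connectivity at most k−1 and every element of 𝒜 is a union of partition classes. -/

import Mathlib

open Set

/-- A symmetric set function: `λ(A) = λ(E \ A)`. -/
def SymmFn {E : Type*} (lam : Set E → ℕ∞) : Prop := ∀ A : Set E, lam Aᶜ = lam A

/-- A submodular set function: `λ(A) + λ(B) ≥ λ(A ∪ B) + λ(A ∩ B)`. -/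
def SubmodularFn {E : Type*} (lam : Set E → ℕ∞) : Prop :=
  ∀ A B : Set E, lam (A ∪ B) + lam (A ∩ B) ≤ lam A + lam B

/-- A limit-closed set function: the union of a (nonempty) chain of sets of connectivity at most
`k` again has connectivity at most `k`. -/
def LimitClosedFn {E : Type*} (lam : Set E → ℕ∞) : Prop :=
  ∀ (k : ℕ) (C : Set (Set E)), C.Nonempty → IsChain (· ⊆ ·) C →
    (∀ A ∈ C, lam A ≤ (k : ℕ∞)) → lam (⋃₀ C) ≤ (k : ℕ∞)

/-- If `𝒜 ⊆ 2^E` contains `∅`, is closed under complements and binary intersections, and all its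
members have connectivity at most `k - 1`, then there is a partition of `E` such that every union
of partition classes has connectivity at most `k - 1` and every member of `𝒜` is a union of
partition classes. -/
theorem lemA {E : Type*} (lam : Set E → ℕ∞) (hlim : LimitClosedFn lam)
    (m : ℕ) (ℬ : Set (Set E)) (hempty : ∅ ∈ ℬ)
    (hcup : ∀ B ∈ ℬ, ∀ B' ∈ ℬ, B ∪ B' ∈ ℬ)
    (hord : ∀ B ∈ ℬ, lam B ≤ (m : ℕ∞)) :
    ∀ ℱ ⊆ ℬ, lam (⋃₀ ℱ) ≤ (m : ℕ∞) ∧ ∀ B ∈ ℬ, lam (⋃₀ ℱ ∪ B) ≤ (m : ℕ∞) := by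
  intro ℱ hℱ
  set G : Set (Set (Set E)) :=
    {F | F ⊆ ℱ ∧ lam (⋃₀ F) ≤ (m : ℕ∞) ∧ ∀ B ∈ ℬ, lam (⋃₀ F ∪ B) ≤ (m : ℕ∞)} with hG
  have hemptyG : ∅ ∈ G := by
    refine ⟨empty_subset _, ?_, ?_⟩
    · simpa using hord ∅ hempty
    · intro B hB; simpa using hord B hB
  have hchainG : ∀ c ⊆ G, IsChain (· ⊆ ·) c → c.Nonempty →
      ∃ ub ∈ G, ∀ s ∈ c, s ⊆ ub := by
    intro c hc hchain hne
    obtain ⟨F0, hF0⟩ := hne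
    have himg : ∀ (f : Set (Set E) → Set E), (∀ F F' : Set (Set E), F ⊆ F' → f F ⊆ f F') →
        IsChain (· ⊆ ·) (f '' c) := fun f hf => hchain.image_of_map_rel _ _ f (fun x y h => hf x y h)
    refine ⟨⋃₀ c, ⟨sUnion_subset fun F hF => (hc hF).1, ?_, ?_⟩,
      fun s hs => subset_sUnion_of_mem hs⟩
    · have h1 := hlim m (sUnion '' c) ⟨_, mem_image_of_mem _ hF0⟩
        (himg _ fun F F' h => sUnion_subset_sUnion h)
        (by rintro _ ⟨F, hF, rfl⟩; exact (hc hF).2.1)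
      have : ⋃₀ (sUnion '' c) = ⋃₀ (⋃₀ c) := by
        ext x
        simp only [mem_sUnion, mem_image]
        constructor
        · rintro ⟨_, ⟨F, hF, rfl⟩, hx⟩
          obtain ⟨A, hA, hxA⟩ := hx
          exact ⟨A, ⟨F, hF, hA⟩, hxA⟩
        · rintro ⟨A, ⟨F, hF, hA⟩, hxA⟩
          exact ⟨⋃₀ F, ⟨F, hF, rfl⟩, A, hA, hxA⟩
      rwa [this] at h1
    · intro B hB
      have h1 := hlim m ((fun F : Set (Set E) => ⋃₀ F ∪ B) '' c) ⟨_, mem_image_of_mem _ hF0⟩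
        (himg _ fun F F' h => union_subset_union_left B (sUnion_subset_sUnion h))
        (by rintro _ ⟨F, hF, rfl⟩; exact (hc hF).2.2 B hB)
      have : ⋃₀ ((fun F : Set (Set E) => ⋃₀ F ∪ B) '' c) = ⋃₀ (⋃₀ c) ∪ B := by
        ext x
        simp only [mem_sUnion, mem_image, mem_union]
        constructor
        · rintro ⟨_, ⟨F, hF, rfl⟩, hx⟩
          rcases hx with hx | hx
          · obtain ⟨A, hA, hxA⟩ := hx
            exact Or.inl ⟨A, ⟨F, hF, hA⟩, hxA⟩
          · exact Or.inr hx
        · rintro (⟨A, ⟨F, hF, hA⟩, hxA⟩ | hx)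
          · exact ⟨⋃₀ F ∪ B, ⟨F, hF, rfl⟩, Or.inl ⟨A, hA, hxA⟩⟩
          · exact ⟨⋃₀ F0 ∪ B, ⟨F0, hF0, rfl⟩, Or.inr hx⟩
      rwa [this] at h1
  obtain ⟨F, -, hFmax⟩ := zorn_subset_nonempty G hchainG ∅ hemptyG
  have hFG := hFmax.prop
  have hFeq : F = ℱ := by
    refine subset_antisymm hFG.1 fun A hA => ?_
    by_contra hAF
    have hins : insert A F ∈ G := by
      refine ⟨insert_subset hA hFG.1, ?_, ?_⟩
      · rw [sUnion_insert, union_comm]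
        exact hFG.2.2 A (hℱ hA)
      · intro B hB
        rw [sUnion_insert, union_comm A, union_assoc]
        exact hFG.2.2 (A ∪ B) (hcup A (hℱ hA) B hB)
    exact hAF (hFmax.2 hins (subset_insert A F) (mem_insert A F))
  rw [← hFeq]
  exact ⟨hFG.2.1, hFG.2.2⟩

theorem stmt10 {E : Type*} (lam : Set E → ℕ∞)
    (hsym : SymmFn lam) (hsub : SubmodularFn lam) (hlim : LimitClosedFn lam)
    (k : ℕ) (hk : 1 ≤ k) (𝒜 : Set (Set E)) (hempty : ∅ ∈ 𝒜)
    (hcompl : ∀ A ∈ 𝒜, Aᶜ ∈ 𝒜) (hinter : ∀ A ∈ 𝒜, ∀ B ∈ 𝒜, A ∩ B ∈ 𝒜)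
    (hord : ∀ A ∈ 𝒜, lam A ≤ ((k - 1 : ℕ) : ℕ∞)) :
    ∃ 𝒬 : Set (Set E), (∅ ∉ 𝒬) ∧ 𝒬.PairwiseDisjoint id ∧ ⋃₀ 𝒬 = univ ∧
      (∀ 𝒮 ⊆ 𝒬, lam (⋃₀ 𝒮) ≤ ((k - 1 : ℕ) : ℕ∞)) ∧
      (∀ A ∈ 𝒜, ∃ 𝒮 ⊆ 𝒬, ⋃₀ 𝒮 = A) := by
  classical
  set m := k - 1 with hm
  have huniv : (univ : Set E) ∈ 𝒜 := by simpa using hcompl ∅ hempty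
  have hcupA : ∀ A ∈ 𝒜, ∀ B ∈ 𝒜, A ∪ B ∈ 𝒜 := by
    intro A hA B hB
    have := hcompl _ (hinter _ (hcompl A hA) _ (hcompl B hB))
    simpa [compl_inter, compl_compl] using this
  -- L : arbitrary unions of members of 𝒜
  set L : Set (Set E) := {X | ∃ ℱ ⊆ 𝒜, X = ⋃₀ ℱ} with hLdef
  have hAL : 𝒜 ⊆ L := fun A hA => ⟨{A}, by simpa using hA, by simp⟩
  have hLlam : ∀ X ∈ L, lam X ≤ (m : ℕ∞) := by
    rintro X ⟨ℱ, hℱ, rfl⟩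
    exact (lemA lam hlim m 𝒜 hempty hcupA hord ℱ hℱ).1
  have hLinter : ∀ X ∈ L, ∀ Y ∈ L, X ∩ Y ∈ L := by
    rintro _ ⟨ℱ, hℱ, rfl⟩ _ ⟨ℱ', hℱ', rfl⟩
    refine ⟨{Z | ∃ A ∈ ℱ, ∃ A' ∈ ℱ', Z = A ∩ A'}, ?_, ?_⟩
    · rintro Z ⟨A, hA, A', hA', rfl⟩
      exact hinter A (hℱ hA) A' (hℱ' hA')
    · ext x
      simp only [mem_inter_iff, mem_sUnion, mem_setOf_eq]
      constructor
      · rintro ⟨⟨A, hA, hxA⟩, ⟨A', hA', hxA'⟩⟩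
        exact ⟨A ∩ A', ⟨A, hA, A', hA', rfl⟩, hxA, hxA'⟩
      · rintro ⟨_, ⟨A, hA, A', hA', rfl⟩, hx⟩
        exact ⟨⟨A, hA, hx.1⟩, ⟨A', hA', hx.2⟩⟩
  -- Lc : complements of members of L
  set Lc : Set (Set E) := {X | Xᶜ ∈ L} with hLcdef
  have h0Lc : ∅ ∈ Lc := by
    show (∅ : Set E)ᶜ ∈ L
    rw [compl_empty]
    exact hAL huniv
  have hcupLc : ∀ X ∈ Lc, ∀ Y ∈ Lc, X ∪ Y ∈ Lc := by
    intro X hX Y hY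
    show (X ∪ Y)ᶜ ∈ L
    rw [compl_union]
    exact hLinter _ hX _ hY
  have hordLc : ∀ X ∈ Lc, lam X ≤ (m : ℕ∞) := by
    intro X hX
    calc lam X = lam Xᶜ := (hsym X).symm
    _ ≤ (m : ℕ∞) := hLlam _ hX
  -- every saturated set has small connectivity
  have key : ∀ S : Set E, (∀ x ∈ S, ∀ y : E, (∀ A ∈ 𝒜, x ∈ A ↔ y ∈ A) → y ∈ S) →
      lam S ≤ (m : ℕ∞) := by
    intro S hsat
    set U : E → Set E := fun y => ⋃₀ {A ∈ 𝒜 | y ∉ A} with hUdef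
    have hUL : ∀ y, U y ∈ L := fun y => ⟨{A ∈ 𝒜 | y ∉ A}, fun A hA => hA.1, rfl⟩
    have hyU : ∀ y, y ∉ U y := by
      rintro y ⟨A, hA, hyA⟩
      exact hA.2 hyA
    have hSU : ∀ y ∉ S, S ⊆ U y := by
      intro y hyS x hxS
      have hnot : ¬ ∀ A ∈ 𝒜, x ∈ A ↔ y ∈ A := fun h => hyS (hsat x hxS y h)
      push_neg at hnot
      obtain ⟨A, hA, hne⟩ := hnot
      rcases hne with ⟨hxA, hyA⟩ | ⟨hxA, hyA⟩
      · exact ⟨A, ⟨hA, hyA⟩, hxA⟩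
      · exact ⟨Aᶜ, ⟨hcompl A hA, by simpa using hyA⟩, hxA⟩
    have hScompl : Sᶜ = ⋃₀ ((fun y => (U y)ᶜ) '' Sᶜ) := by
      ext z
      simp only [mem_sUnion, mem_image, mem_compl_iff]
      constructor
      · intro hz
        exact ⟨(U z)ᶜ, ⟨z, hz, rfl⟩, hyU z⟩
      · rintro ⟨_, ⟨y, hy, rfl⟩, hz⟩
        intro hzS
        exact hz (hSU y hy hzS)
    have hsub' : ((fun y => (U y)ᶜ) '' Sᶜ) ⊆ Lc := by
      rintro _ ⟨y, hy, rfl⟩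
      show ((U y)ᶜ)ᶜ ∈ L
      rw [compl_compl]
      exact hUL y
    have := (lemA lam hlim m Lc h0Lc hcupLc hordLc _ hsub').1
    rw [← hScompl] at this
    calc lam S = lam Sᶜ := (hsym S).symm
    _ ≤ (m : ℕ∞) := this
  -- the partition into equivalence classes
  set cls : E → Set E := fun x => {y | ∀ A ∈ 𝒜, x ∈ A ↔ y ∈ A} with hclsdef
  have hself : ∀ x, x ∈ cls x := fun x A _ => Iff.rfl
  have hclseq : ∀ x y, y ∈ cls x → cls x = cls y := by
    intro x y hxy
    ext z
    constructor
    · intro hz A hA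
      exact ((hxy A hA).symm).trans (hz A hA)
    · intro hz A hA
      exact (hxy A hA).trans (hz A hA)
  refine ⟨{C | ∃ x, C = cls x}, ?_, ?_, ?_, ?_, ?_⟩
  · rintro ⟨x, hx⟩
    exact absurd (hx ▸ hself x) (notMem_empty x)
  · rintro C ⟨x, rfl⟩ D ⟨y, rfl⟩ hne
    refine disjoint_left.2 fun z hzx hzy => ?_
    exact hne (by rw [hclseq x z hzx, hclseq y z hzy])
  · exact eq_univ_of_forall fun x => ⟨cls x, ⟨x, rfl⟩, hself x⟩
  · intro 𝒮 h𝒮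
    refine key _ ?_
    rintro x ⟨C, hC, hxC⟩ y hy
    obtain ⟨x₀, rfl⟩ := h𝒮 hC
    refine ⟨cls x₀, hC, fun A hA => (hxC A hA).trans (hy A hA)⟩
  · intro A hA
    refine ⟨{C | (∃ x, C = cls x) ∧ C ⊆ A}, fun C hC => hC.1, ?_⟩
    apply subset_antisymm
    · exact sUnion_subset fun C hC => hC.2
    · intro x hx
      refine ⟨cls x, ⟨⟨x, rfl⟩, fun y hy => (hy A hA).1 hx⟩, hself x⟩
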